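/- The 5×5 real symmetric tridiagonal matrix with zero diagonal and off-diagonal entries (J₁, J₂, J₂, J₁), with J₁, J₂ > 0, has eigenvalues 0, ±J₁, ±√(J₁² + 2J₂²). -/

import Mathlib

open Matrix

set_option maxHeartbeats 1000000 in
/-- The 5×5 real symmetric tridiagonal matrix with zero diagonal and off-diagonal
entries `(J₁, J₂, J₂, J₁)`, with `J₁, J₂ > 0`, has eigenvalues `0, ±J₁, ±√(J₁² + 2J₂²)`. -/
theorem stmt1 (J1 J2 : ℝ) (hJ1 : 0 < J1) (hJ2 : 0 < J2)
    (H : Matrix (Fin 5) (Fin 5) ℝ)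
    (hH : H = !![0, J1, 0, 0, 0; J1, 0, J2, 0, 0; 0, J2, 0, J2, 0;
                 0, 0, J2, 0, J1; 0, 0, 0, J1, 0]) :
    spectrum ℝ H =
      {0, J1, -J1, Real.sqrt (J1^2 + 2*J2^2), -Real.sqrt (J1^2 + 2*J2^2)} := by
  subst hH
  have hs : (0:ℝ) ≤ J1^2 + 2*J2^2 := by positivity
  have hsq : Real.sqrt (J1^2 + 2*J2^2) ^ 2 = J1^2 + 2*J2^2 := Real.sq_sqrt hs
  ext μ
  rw [spectrum.mem_iff, Matrix.isUnit_iff_isUnit_det, isUnit_iff_ne_zero, not_not]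
  have hA : (algebraMap ℝ (Matrix (Fin 5) (Fin 5) ℝ)) μ -
      !![0, J1, 0, 0, 0; J1, 0, J2, 0, 0; 0, J2, 0, J2, 0;
         0, 0, J2, 0, J1; 0, 0, 0, J1, 0] =
      !![μ, -J1, 0, 0, 0; -J1, μ, -J2, 0, 0; 0, -J2, μ, -J2, 0;
         0, 0, -J2, μ, -J1; 0, 0, 0, -J1, μ] := by
    ext i j
    fin_cases i <;> fin_cases j <;>
      simp [Matrix.algebraMap_eq_diagonal, Matrix.diagonal, Matrix.vecHead, Matrix.vecTail]
  have hdet : ((algebraMap ℝ (Matrix (Fin 5) (Fin 5) ℝ)) μ -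
      !![0, J1, 0, 0, 0; J1, 0, J2, 0, 0; 0, J2, 0, J2, 0;
         0, 0, J2, 0, J1; 0, 0, 0, J1, 0]).det
      = μ * ((μ - J1) * (μ + J1)) * (μ^2 - (J1^2 + 2*J2^2)) := by
    rw [hA]
    simp [Matrix.det_succ_row_zero, Fin.sum_univ_succ, Fin.succAbove]
    ring
  rw [hdet]
  constructor
  · intro h
    rcases mul_eq_zero.1 h with h1 | h2
    · rcases mul_eq_zero.1 h1 with h | h
      · exact Or.inl h
      · rcases mul_eq_zero.1 h with h | h
        · exact Or.inr (Or.inl (by linarith))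
        · exact Or.inr (Or.inr (Or.inl (by linarith)))
    · have : μ^2 = Real.sqrt (J1^2 + 2*J2^2) ^ 2 := by rw [hsq]; linarith
      rcases sq_eq_sq_iff_eq_or_eq_neg.1 this with h | h
      · exact Or.inr (Or.inr (Or.inr (Or.inl h)))
      · exact Or.inr (Or.inr (Or.inr (Or.inr h)))
  · intro h
    simp only [Set.mem_insert_iff, Set.mem_singleton_iff] at h
    rcases h with h | h | h | h | h <;> subst h
    · ring
    · ring
    · ring
    · exact mul_eq_zero.2 (Or.inr (by rw [hsq]; ring))
    · exact mul_eq_zero.2 (Or.inr (by rw [neg_sq, hsq]; ring))
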